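/- arXiv:1511.02383 — 4 statements merged into one kernel-verified Lean document; each statement's English description precedes it below -/
import Mathlib

section
/- For every natural number n, every polynomial f ∈ ℂ[X] of degree at most n, and every z ∈ ℂ, one has (n+1)·∫_ℂ f(w)·(1 + z·conj(w))^n dμ_n(w) = f(z). That is, (n+1)(1+z·conj(w))^n is the reproducing (Bergman) kernel for polynomials of degree at most n with respect to μ_n. -/
open MeasureTheory Set Filter
open scoped NNReal ENNReal Real

noncomputable def mu (n : ℕ) : Measure ℂ :=
  volume.withDensity fun z => ENNReal.ofReal ((1 / Real.pi) * ((1 + ‖z‖ ^ 2) ^ (n + 2))⁻¹)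

noncomputable def dens (n : ℕ) (w : ℂ) : ℝ := (1 / Real.pi) * ((1 + ‖w‖ ^ 2) ^ (n + 2))⁻¹

lemma dens_pos (n : ℕ) (w : ℂ) : 0 < dens n w := by
  have h : (0:ℝ) < 1 + ‖w‖ ^ 2 := by positivity
  unfold dens; positivity

lemma dens_cont (n : ℕ) : Continuous (dens n) := by
  apply Continuous.mul continuous_const
  apply Continuous.inv₀
  · fun_prop
  · intro w
    have h : (0:ℝ) < 1 + ‖w‖ ^ 2 := by positivity
    positivity

lemma mu_integral (n : ℕ) (g : ℂ → ℂ) :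
    ∫ w, g w ∂(mu n) = ∫ w, dens n w • g w := by
  have : mu n = volume.withDensity fun z => ((Real.toNNReal (dens n z) : ℝ≥0) : ℝ≥0∞) := by
    rfl
  rw [this, integral_withDensity_eq_integral_smul
    ((dens_cont n).measurable.real_toNNReal) g]
  refine integral_congr_ae (Filter.Eventually.of_forall fun w => ?_)
  show (dens n w).toNNReal • g w = _
  rw [NNReal.smul_def, Real.coe_toNNReal _ (dens_pos n w).le]

lemma integrable_bound : Integrable (fun w : ℂ => ((1+‖w‖)^(3:ℕ))⁻¹) volume := by
  have h := integrable_one_add_norm (E := ℂ) (μ := volume) (r := 3)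
    (by rw [Complex.finrank_real_complex]; norm_num)
  refine h.congr (Filter.Eventually.of_forall fun w => ?_)
  have h0 : (0:ℝ) ≤ 1 + ‖w‖ := by positivity
  show (1 + ‖w‖) ^ (-(3:ℝ)) = _
  rw [Real.rpow_neg h0, show (3:ℝ) = ((3:ℕ):ℝ) by norm_num, Real.rpow_natCast]

lemma integrable_dens (n k : ℕ) (hk : k ≤ 2*n+1) (g : ℂ → ℂ)
    (hg : AEStronglyMeasurable (fun w => dens n w • g w) volume) (C : ℝ)
    (hb : ∀ w, ‖g w‖ ≤ C * (1+‖w‖)^k) :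
    Integrable (fun w => dens n w • g w) volume := by
  have hC : 0 ≤ C := by have := (norm_nonneg (g 0)).trans (hb 0); simpa using this
  refine Integrable.mono' ((integrable_bound.const_mul (C * 2^(n+2) / Real.pi)))
    hg (Filter.Eventually.of_forall fun w => ?_)
  set t := ‖w‖ with ht
  have ht0 : 0 ≤ t := norm_nonneg w
  have hπ : (0:ℝ) < Real.pi := Real.pi_pos
  have hA : (0:ℝ) < (1+t^2)^(n+2) := by positivity
  have hB : (0:ℝ) < (1+t)^(3:ℕ) := by positivity
  have key : (1+t)^k * (1+t)^3 ≤ 2^(n+2) * (1+t^2)^(n+2) := by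
    calc (1+t)^k * (1+t)^3 = (1+t)^(k+3) := (pow_add _ _ _).symm
    _ ≤ (1+t)^(2*(n+2)) := pow_le_pow_right₀ (by linarith) (by omega)
    _ = ((1+t)^2)^(n+2) := by rw [pow_mul]
    _ ≤ (2*(1+t^2))^(n+2) := by
        apply pow_le_pow_left₀ (by positivity)
        nlinarith [sq_nonneg (1-t)]
    _ = 2^(n+2) * (1+t^2)^(n+2) := mul_pow _ _ _
  have h1 : ‖dens n w • g w‖ ≤ dens n w * (C * (1+t)^k) := by
    rw [norm_smul, Real.norm_eq_abs, abs_of_pos (dens_pos n w)]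
    exact mul_le_mul_of_nonneg_left (hb w) (dens_pos n w).le
  refine h1.trans ?_
  have e1 : dens n w * (C * (1+t)^k) = (C * (1+t)^k / Real.pi) / ((1+t^2)^(n+2)) := by
    unfold dens; rw [← ht]; ring
  have e2 : C * 2^(n+2) / Real.pi * ((1+t)^(3:ℕ))⁻¹
      = (C * 2^(n+2) / Real.pi) / ((1+t)^(3:ℕ)) := by ring
  rw [e1, e2, div_le_div_iff₀ hA hB]
  calc C * (1+t)^k / Real.pi * (1+t)^(3:ℕ) = C / Real.pi * ((1+t)^k * (1+t)^3) := by ring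
  _ ≤ C / Real.pi * (2^(n+2) * (1+t^2)^(n+2)) :=
      mul_le_mul_of_nonneg_left key (div_nonneg hC hπ.le)
  _ = C * 2^(n+2) / Real.pi * (1+t^2)^(n+2) := by ring
lemma tendsto_aux (k : ℕ) : Tendsto (fun t : ℝ => ((1+t)^(k+1))⁻¹) atTop (nhds 0) := by
  apply Filter.Tendsto.comp tendsto_inv_atTop_zero
  exact (tendsto_pow_atTop (Nat.succ_ne_zero k)).comp (tendsto_atTop_add_const_left _ 1 tendsto_id)

lemma one_add_pos {t : ℝ} (ht : t ∈ Ioi (0:ℝ)) : (0:ℝ) < 1 + t := by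
  simp only [mem_Ioi] at ht; linarith

/-- integrability of `(1+t)^{-(j+2)}` on `(0,∞)` -/
lemma base_int (j : ℕ) : IntegrableOn (fun t : ℝ => ((1+t)^(j+2))⁻¹) (Ioi 0) volume := by
  have hd : ∀ t ∈ Ioi (0:ℝ), HasDerivAt (fun t : ℝ => -(1/((j:ℝ)+1)) * ((1+t)^(j+1))⁻¹)
      (((1+t)^(j+2))⁻¹) t := by
    intro t ht
    have h1t : (0:ℝ) < 1 + t := one_add_pos ht
    have hf : HasDerivAt (fun t : ℝ => (1+t)^(j+1)) (((j:ℝ)+1) * (1+t)^j) t := by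
      have := ((hasDerivAt_id t).const_add 1).pow (j+1)
      simp at this; exact this
    have := (hf.inv (by positivity)).const_mul (-(1/((j:ℝ)+1)))
    refine this.congr_deriv ?_
    field_simp
    ring
  exact integrableOn_Ioi_deriv_of_nonneg
    (by
      apply ContinuousAt.continuousWithinAt
      have hca : ContinuousAt (fun t : ℝ => ((1+t)^(j+1))) 0 := by fun_prop
      exact continuousAt_const.mul (hca.inv₀ (by norm_num)))
    hd (fun t ht => by have := one_add_pos ht; positivity)
    (by simpa using (tendsto_aux j).const_mul (-(1/((j:ℝ)+1))))

/-- value of `∫ (1+t)^{-(j+2)}` on `(0,∞)` -/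
lemma base_val (j : ℕ) : ∫ t in Ioi (0:ℝ), ((1+t)^(j+2))⁻¹ = 1/((j:ℝ)+1) := by
  have hd : ∀ t ∈ Ioi (0:ℝ), HasDerivAt (fun t : ℝ => -(1/((j:ℝ)+1)) * ((1+t)^(j+1))⁻¹)
      (((1+t)^(j+2))⁻¹) t := by
    intro t ht
    have h1t : (0:ℝ) < 1 + t := one_add_pos ht
    have hf : HasDerivAt (fun t : ℝ => (1+t)^(j+1)) (((j:ℝ)+1) * (1+t)^j) t := by
      have := ((hasDerivAt_id t).const_add 1).pow (j+1)
      simp at this; exact this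
    have := (hf.inv (by positivity)).const_mul (-(1/((j:ℝ)+1)))
    refine this.congr_deriv ?_
    field_simp
    ring
  rw [integral_Ioi_of_hasDerivAt_of_nonneg
    (by
      apply ContinuousAt.continuousWithinAt
      have hca : ContinuousAt (fun t : ℝ => ((1+t)^(j+1))) 0 := by fun_prop
      exact continuousAt_const.mul (hca.inv₀ (by norm_num)))
    hd (fun t ht => by have := one_add_pos ht; positivity)
    (by simpa using (tendsto_aux j).const_mul (-(1/((j:ℝ)+1))))]
  simp

/-- integrability of `t^a (1+t)^{-(a+j+2)}` on `(0,∞)` -/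
lemma J_int (a j : ℕ) :
    IntegrableOn (fun t : ℝ => t^a * ((1+t)^(a+j+2))⁻¹) (Ioi 0) volume := by
  refine Integrable.mono' (base_int j) ?_ ?_
  · apply Measurable.aestronglyMeasurable
    fun_prop
  · rw [ae_restrict_iff' measurableSet_Ioi]
    refine Filter.Eventually.of_forall fun t ht => ?_
    have h1t : (0:ℝ) < 1 + t := one_add_pos ht
    have ht0 : (0:ℝ) < t := ht
    rw [Real.norm_eq_abs, abs_of_nonneg (by positivity)]
    have h1 : t^a ≤ (1+t)^a := pow_le_pow_left₀ ht0.le (by linarith) a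
    calc t^a * ((1+t)^(a+j+2))⁻¹ ≤ (1+t)^a * ((1+t)^(a+j+2))⁻¹ := by
          apply mul_le_mul_of_nonneg_right h1 (by positivity)
    _ = ((1+t)^(j+2))⁻¹ := by
          rw [pow_add]
          field_simp
          ring

/-- value of `∫ t^a (1+t)^{-(a+j+2)}` on `(0,∞)`: the Beta value `a! j! / (a+j+1)!` -/
lemma J_val (a j : ℕ) :
    ∫ t in Ioi (0:ℝ), t^a * ((1+t)^(a+j+2))⁻¹
      = (a.factorial : ℝ) * (j.factorial : ℝ) / ((a+j+1).factorial : ℝ) := by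
  induction a with
  | zero =>
      simp only [pow_zero, one_mul, zero_add]
      rw [base_val j]
      have h0 : ((j.factorial:ℝ)) ≠ 0 := Nat.cast_ne_zero.2 (Nat.factorial_ne_zero _)
      rw [Nat.factorial_succ]
      push_cast
      field_simp
      simp
  | succ a ih =>
      -- F t = -(1/(a+j+2)) * t^(a+1) * ((1+t)^(a+j+2))⁻¹
      set c : ℝ := ((a:ℝ)+1)/((a:ℝ)+(j:ℝ)+2) with hc
      have hajp : (0:ℝ) < (a:ℝ)+(j:ℝ)+2 := by positivity
      set F : ℝ → ℝ := fun t => -(1/((a:ℝ)+(j:ℝ)+2)) * (t^(a+1) * ((1+t)^(a+j+2))⁻¹) with hF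
      set f' : ℝ → ℝ := fun t =>
        t^(a+1) * ((1+t)^(a+1+j+2))⁻¹ - c * (t^a * ((1+t)^(a+j+2))⁻¹) with hf'
      have hd : ∀ t ∈ Ioi (0:ℝ), HasDerivAt F (f' t) t := by
        intro t ht
        have h1t : (0:ℝ) < 1 + t := one_add_pos ht
        have hp1 : HasDerivAt (fun t : ℝ => t^(a+1)) (((a:ℝ)+1) * t^a) t := by
          simpa using hasDerivAt_pow (a+1) t
        have hp2 : HasDerivAt (fun t : ℝ => (1+t)^(a+j+2))
            (((a:ℝ)+(j:ℝ)+2) * (1+t)^(a+j+1)) t := by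
          have := ((hasDerivAt_id t).const_add 1).pow (a+j+2)
          simp only [id_eq, Nat.add_sub_cancel, mul_one] at this
          refine this.congr_deriv ?_
          push_cast
          ring
        have := (hp1.mul (hp2.inv (by positivity))).const_mul (-(1/((a:ℝ)+(j:ℝ)+2)))
        refine this.congr_deriv ?_
        rw [hf', hc]
        simp only [Pi.inv_apply]
        field_simp
        ring
      have hcont : ContinuousWithinAt F (Ici 0) 0 := by
        apply ContinuousAt.continuousWithinAt
        have hca : ContinuousAt (fun t : ℝ => ((1+t)^(a+j+2))) 0 := by fun_prop
        exact continuousAt_const.mul ((continuousAt_pow _ _).mul (hca.inv₀ (by norm_num)))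
      have htend : Tendsto F atTop (nhds 0) := by
        rw [hF]
        have hsq : Tendsto (fun t : ℝ => t^(a+1) * ((1+t)^(a+j+2))⁻¹) atTop (nhds 0) := by
          apply squeeze_zero' (g := fun t : ℝ => ((1+t)^(j+1))⁻¹)
          · filter_upwards [eventually_ge_atTop (0:ℝ)] with t ht
            positivity
          · filter_upwards [eventually_ge_atTop (0:ℝ)] with t ht
            have h1t : (0:ℝ) < 1 + t := by linarith
            have h1 : t^(a+1) ≤ (1+t)^(a+1) := pow_le_pow_left₀ ht (by linarith) _
            calc t^(a+1) * ((1+t)^(a+j+2))⁻¹ ≤ (1+t)^(a+1) * ((1+t)^(a+j+2))⁻¹ := by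
                  apply mul_le_mul_of_nonneg_right h1 (by positivity)
            _ = ((1+t)^(j+1))⁻¹ := by
                  rw [show a+j+2 = (a+1)+(j+1) by omega, pow_add]
                  field_simp
                  ring
          · exact tendsto_aux j
        simpa using hsq.const_mul (-(1/((a:ℝ)+(j:ℝ)+2)))
      have hint : IntegrableOn f' (Ioi 0) volume := by
        exact (J_int (a+1) j).sub ((J_int a j).const_mul c)
      have key := integral_Ioi_of_hasDerivAt_of_tendsto hcont hd hint htend
      have hF0 : F 0 = 0 := by simp [hF]
      rw [hF0, sub_zero] at key
      have hsplit : ∫ t in Ioi (0:ℝ), f' t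
          = (∫ t in Ioi (0:ℝ), t^(a+1) * ((1+t)^(a+1+j+2))⁻¹)
            - c * ∫ t in Ioi (0:ℝ), t^a * ((1+t)^(a+j+2))⁻¹ := by
        rw [hf']
        rw [integral_sub (J_int (a+1) j) ((J_int a j).const_mul c), integral_const_mul]
      rw [key] at hsplit
      have : ∫ t in Ioi (0:ℝ), t^(a+1) * ((1+t)^(a+1+j+2))⁻¹
          = c * ∫ t in Ioi (0:ℝ), t^a * ((1+t)^(a+j+2))⁻¹ := by linarith
      rw [this, ih, hc]
      have e : (((a+1).factorial:ℕ) : ℝ) = ((a:ℝ)+1) * (a.factorial:ℝ) := by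
        rw [Nat.factorial_succ]; push_cast; ring
      have e2 : (((a+1+j+1).factorial:ℕ) : ℝ) = ((a:ℝ)+(j:ℝ)+2) * ((a+j+1).factorial:ℝ) := by
        rw [show a+1+j+1 = (a+j+1)+1 by omega, Nat.factorial_succ]; push_cast; ring
      rw [e, e2]
      have h1 : ((a+j+1).factorial : ℝ) ≠ 0 := Nat.cast_ne_zero.2 (Nat.factorial_ne_zero _)
      field_simp

lemma angular_ne (m : ℤ) (hm : m ≠ 0) :
    ∫ θ in Ioo (-Real.pi) Real.pi, Complex.exp (m * θ * Complex.I) = 0 := by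
  have hle : -Real.pi ≤ Real.pi := by linarith [Real.pi_pos]
  rw [← integral_Ioc_eq_integral_Ioo, ← intervalIntegral.integral_of_le hle]
  have hc : ((m:ℂ) * Complex.I) ≠ 0 :=
    mul_ne_zero (Int.cast_ne_zero.2 hm) Complex.I_ne_zero
  have harg : ∀ θ : ℝ, (m:ℂ) * θ * Complex.I = ((m:ℂ) * Complex.I) * θ := fun θ => by ring
  simp_rw [harg]
  rw [integral_exp_mul_complex hc, div_eq_zero_iff]
  left
  rw [Complex.ofReal_neg,
    show (m:ℂ)*Complex.I*(Real.pi:ℂ) = ((m:ℂ)*(Real.pi:ℂ))*Complex.I by ring,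
    show (m:ℂ)*Complex.I*(-(Real.pi:ℂ)) = (-((m:ℂ)*(Real.pi:ℂ)))*Complex.I by ring,
    Complex.exp_mul_I, Complex.exp_mul_I, Complex.sin_neg, Complex.cos_neg,
    Complex.sin_int_mul_pi]
  ring

lemma angular_zero : ∫ _θ in Ioo (-Real.pi) Real.pi, (1:ℂ) = ((2*Real.pi : ℝ) : ℂ) := by
  rw [setIntegral_const, measureReal_def, Real.volume_Ioo, ENNReal.toReal_ofReal (by linarith [Real.pi_pos])]
  rw [Complex.real_smul]
  push_cast
  ring

lemma polar_symm_eq (p : ℝ × ℝ) :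
    Complex.polarCoord.symm p = (p.1 : ℂ) * Complex.exp (p.2 * Complex.I) := by
  rw [Complex.polarCoord_symm_apply, Complex.exp_mul_I]
  simp [Complex.ofReal_cos, Complex.ofReal_sin]

lemma I_ab (n a b : ℕ) :
    ∫ w : ℂ, dens n w • (w^a * ((starRingEnd ℂ) w)^b)
      = ((∫ r in Ioi (0:ℝ), r^(a+b+1) * ((1/Real.pi) * ((1+r^2)^(n+2))⁻¹) : ℝ) : ℂ)
        * ∫ θ in Ioo (-Real.pi) Real.pi, Complex.exp (((((a:ℤ) - (b:ℤ)) : ℤ) : ℂ) * θ * Complex.I) := by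
  rw [← Complex.integral_comp_polarCoord_symm,
    show polarCoord.target = Ioi (0:ℝ) ×ˢ Ioo (-Real.pi) Real.pi from rfl]
  have hEq : EqOn
      (fun p : ℝ × ℝ => p.1 • (dens n (Complex.polarCoord.symm p) •
        ((Complex.polarCoord.symm p)^a * ((starRingEnd ℂ) (Complex.polarCoord.symm p))^b)))
      (fun p : ℝ × ℝ =>
        (((p.1^(a+b+1) * ((1/Real.pi) * ((1+p.1^2)^(n+2))⁻¹) : ℝ)) : ℂ)
          * Complex.exp (((((a:ℤ) - (b:ℤ)) : ℤ) : ℂ) * p.2 * Complex.I))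
      (Ioi (0:ℝ) ×ˢ Ioo (-Real.pi) Real.pi) := by
    rintro ⟨r, θ⟩ ⟨hr, hθ⟩
    simp only [mem_Ioi] at hr
    set w : ℂ := Complex.polarCoord.symm (r, θ) with hw
    have hwe : w = (r:ℂ) * Complex.exp (θ * Complex.I) := polar_symm_eq _
    have hnw : ‖w‖ = r := by
      rw [hwe]
      simp only [norm_mul, Complex.norm_real, Real.norm_eq_abs,
        Complex.norm_exp_ofReal_mul_I, mul_one]
      exact abs_of_pos hr
    have hconj : (starRingEnd ℂ) w = (r:ℂ) * Complex.exp (-(θ * Complex.I)) := by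
      rw [hwe, map_mul, Complex.conj_ofReal, ← Complex.exp_conj]
      congr 1
      simp [Complex.conj_ofReal]
    have hpow : w^a * ((starRingEnd ℂ) w)^b
        = (r:ℂ)^(a+b) * Complex.exp (((((a:ℤ) - (b:ℤ)) : ℤ) : ℂ) * θ * Complex.I) := by
      rw [hconj, hwe, mul_pow, mul_pow, ← Complex.exp_nat_mul, ← Complex.exp_nat_mul]
      calc ((r:ℂ)^a * Complex.exp ((a:ℂ) * ((θ:ℂ) * Complex.I)))
            * ((r:ℂ)^b * Complex.exp ((b:ℂ) * (-((θ:ℂ) * Complex.I))))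
          = (r:ℂ)^(a+b) * (Complex.exp ((a:ℂ) * ((θ:ℂ) * Complex.I))
              * Complex.exp ((b:ℂ) * (-((θ:ℂ) * Complex.I)))) := by
            rw [pow_add]; ring
        _ = (r:ℂ)^(a+b) * Complex.exp (((((a:ℤ) - (b:ℤ)) : ℤ) : ℂ) * θ * Complex.I) := by
            rw [← Complex.exp_add]
            congr 1
            push_cast
            ring
    show _ • (dens n w • (w^a * ((starRingEnd ℂ) w)^b)) = _
    rw [hpow]
    unfold dens
    rw [hnw]
    simp only [smul_eq_mul, Complex.real_smul]
    push_cast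
    ring
  rw [setIntegral_congr_fun (measurableSet_Ioi.prod measurableSet_Ioo) hEq,
    Measure.volume_eq_prod, ← Measure.prod_restrict,
    integral_prod_mul (fun r : ℝ => ((r^(a+b+1) * ((1/Real.pi) * ((1+r^2)^(n+2))⁻¹) : ℝ) : ℂ))
      (fun θ : ℝ => Complex.exp (((((a:ℤ) - (b:ℤ)) : ℤ) : ℂ) * θ * Complex.I))]
  congr 1
  exact integral_ofReal

lemma radial_val (n k : ℕ) (hk : k ≤ n) :
    ∫ r in Ioi (0:ℝ), r^(2*k+1) * ((1/Real.pi) * ((1+r^2)^(n+2))⁻¹)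
      = (1/(2*Real.pi)) * ((k.factorial : ℝ) * ((n-k).factorial : ℝ) / ((n+1).factorial : ℝ)) := by
  have hsub := integral_comp_rpow_Ioi (fun t : ℝ => t^k * ((1+t)^(n+2))⁻¹) (p := 2) (by norm_num)
  have hEq : EqOn
      (fun x : ℝ => (|2| * x ^ ((2:ℝ) - 1)) • ((fun t : ℝ => t^k * ((1+t)^(n+2))⁻¹) (x ^ (2:ℝ))))
      (fun x : ℝ => 2 * (x^(2*k+1) * ((1+x^2)^(n+2))⁻¹))
      (Ioi (0:ℝ)) := by
    intro x hx
    have hx0 : (0:ℝ) < x := hx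
    simp only
    rw [show ((2:ℝ) - 1) = 1 by norm_num, Real.rpow_one,
      show (x:ℝ) ^ (2:ℝ) = x^(2:ℕ) by rw [← Real.rpow_natCast]; norm_num]
    rw [smul_eq_mul]
    rw [← pow_mul, show |(2:ℝ)| = 2 from abs_of_pos (by norm_num)]
    ring
  rw [setIntegral_congr_fun measurableSet_Ioi hEq] at hsub
  have hkj : k + (n - k) + 2 = n + 2 := by omega
  have hkj2 : k + (n - k) + 1 = n + 1 := by omega
  have hJ : ∫ t in Ioi (0:ℝ), t^k * ((1+t)^(n+2))⁻¹
      = (k.factorial : ℝ) * ((n-k).factorial : ℝ) / ((n+1).factorial : ℝ) := by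
    have := J_val k (n-k)
    rw [hkj, hkj2] at this
    exact this
  rw [hJ] at hsub
  have h2 : ∫ x in Ioi (0:ℝ), 2 * (x^(2*k+1) * ((1+x^2)^(n+2))⁻¹)
      = 2 * ∫ x in Ioi (0:ℝ), x^(2*k+1) * ((1+x^2)^(n+2))⁻¹ := integral_const_mul _ _
  rw [h2] at hsub
  have hval : ∫ x in Ioi (0:ℝ), x^(2*k+1) * ((1+x^2)^(n+2))⁻¹
      = (k.factorial : ℝ) * ((n-k).factorial : ℝ) / ((n+1).factorial : ℝ) / 2 := by
    linarith
  have : (fun r : ℝ => r^(2*k+1) * ((1/Real.pi) * ((1+r^2)^(n+2))⁻¹))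
      = fun r : ℝ => (1/Real.pi) * (r^(2*k+1) * ((1+r^2)^(n+2))⁻¹) := by
    funext r; ring
  rw [this, integral_const_mul, hval]
  have hπ : Real.pi ≠ 0 := Real.pi_ne_zero
  field_simp

lemma I_off (n a b : ℕ) (hab : a ≠ b) :
    ∫ w : ℂ, dens n w • (w^a * ((starRingEnd ℂ) w)^b) = 0 := by
  rw [I_ab, angular_ne _ (by
    intro h
    exact hab (by omega)), mul_zero]

lemma I_diag (n k : ℕ) (hk : k ≤ n) :
    ∫ w : ℂ, dens n w • (w^k * ((starRingEnd ℂ) w)^k)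
      = (((k.factorial : ℝ) * ((n-k).factorial : ℝ) / ((n+1).factorial : ℝ) : ℝ) : ℂ) := by
  rw [I_ab]
  simp only [sub_self, Int.cast_zero, zero_mul, Complex.exp_zero]
  rw [angular_zero, show k+k+1 = 2*k+1 by omega, radial_val n k hk]
  push_cast
  have hπ : (Real.pi : ℂ) ≠ 0 := by
    simpa using Complex.ofReal_ne_zero.2 Real.pi_ne_zero
  field_simp

lemma norm_conj_pow (w : ℂ) (b : ℕ) : ‖((starRingEnd ℂ) w)^b‖ = ‖w‖^b := by
  rw [norm_pow, RCLike.norm_conj]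

lemma mono_repr (n k : ℕ) (hk : k ≤ n) (z : ℂ) :
    ((n:ℂ)+1) * ∫ w : ℂ, dens n w • (w^k * (1 + z * (starRingEnd ℂ) w)^n) = z^k := by
  have hker : ∀ w : ℂ, dens n w • (w^k * (1 + z * (starRingEnd ℂ) w)^n)
      = ∑ j ∈ Finset.range (n+1),
          ((n.choose j : ℂ) * z^j) * (dens n w • (w^k * ((starRingEnd ℂ) w)^j)) := by
    intro w
    rw [add_comm (1:ℂ), add_pow, Finset.mul_sum, Finset.smul_sum]
    refine Finset.sum_congr rfl fun j _hj => ?_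
    rw [mul_smul_comm]
    congr 1
    simp only [one_pow, mul_one, mul_pow]
    ring
  simp_rw [hker]
  rw [integral_finset_sum _ (fun j hj => ?_)]
  swap
  · -- integrability
    have hj' : j ≤ n := Nat.lt_succ_iff.mp (Finset.mem_range.mp hj)
    have hi := integrable_dens n (k+j) (by omega)
      (fun w => ((n.choose j : ℂ) * z^j) * (w^k * ((starRingEnd ℂ) w)^j))
      (((dens_cont n).smul
        (continuous_const.mul ((continuous_pow k).mul
          ((continuous_star (R := ℂ)).pow j)))).aestronglyMeasurable)
      (‖(n.choose j : ℂ) * z^j‖)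
      (fun w => by
        simp only [norm_mul, norm_pow, RCLike.norm_conj]
        have h1 : ‖w‖^k * ‖w‖^j ≤ (1+‖w‖)^(k+j) := by
          rw [← pow_add]
          exact pow_le_pow_left₀ (norm_nonneg w) (by linarith [norm_nonneg w]) _
        calc ‖(n.choose j : ℂ)‖ * ‖z‖^j * (‖w‖^k * ‖w‖^j)
            ≤ ‖(n.choose j : ℂ)‖ * ‖z‖^j * (1+‖w‖)^(k+j) :=
              mul_le_mul_of_nonneg_left h1 (by positivity)
          _ = ‖(n.choose j : ℂ)‖ * ‖z‖^j * (1+‖w‖)^(k+j) := rfl)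
    refine hi.congr (Filter.Eventually.of_forall fun w => ?_)
    exact (mul_smul_comm _ _ _).symm
  · simp_rw [integral_const_mul]
    rw [Finset.mul_sum]
    rw [Finset.sum_eq_single_of_mem k (Finset.mem_range.mpr (by omega))
      (fun j _hj hjk => by rw [I_off n k j (fun h => hjk h.symm), mul_zero, mul_zero])]
    rw [I_diag n k hk]
    push_cast
    have hne : (((n+1).factorial : ℕ) : ℂ) ≠ 0 :=
      Nat.cast_ne_zero.2 (Nat.factorial_ne_zero _)
    have hfac : ((n:ℂ)+1) * (n.choose k : ℂ) * ((k.factorial : ℂ) * ((n-k).factorial : ℂ))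
        = (((n+1).factorial : ℕ) : ℂ) := by
      have h := Nat.choose_mul_factorial_mul_factorial hk
      rw [Nat.factorial_succ]
      push_cast [← h]
      ring
    field_simp
    linear_combination z^k * hfac

/-- `(n+1)(1+z·conj w)^n` is the reproducing (Bergman) kernel for polynomials of degree
at most `n` with respect to `μ_n`. -/
theorem bergman_reproducing (n : ℕ) (f : Polynomial ℂ) (hf : f.natDegree ≤ n) (z : ℂ) :
    ((n : ℂ) + 1) * ∫ w : ℂ, f.eval w * (1 + z * (starRingEnd ℂ) w) ^ n ∂(mu n) =
      f.eval z := by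
  rw [mu_integral]
  have hfe : ∀ w : ℂ, f.eval w = ∑ k ∈ Finset.range (n+1), f.coeff k * w^k :=
    fun w => Polynomial.eval_eq_sum_range' (Nat.lt_succ_of_le hf) w
  have hsum : ∀ w : ℂ, dens n w • (f.eval w * (1 + z * (starRingEnd ℂ) w)^n)
      = ∑ k ∈ Finset.range (n+1),
          f.coeff k * (dens n w • (w^k * (1 + z * (starRingEnd ℂ) w)^n)) := by
    intro w
    rw [hfe w, Finset.sum_mul, Finset.smul_sum]
    refine Finset.sum_congr rfl fun k _ => ?_
    rw [mul_smul_comm]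
    congr 1
    ring
  simp_rw [hsum]
  rw [integral_finset_sum _ (fun k hk => ?_)]
  swap
  · refine Integrable.const_mul ?_ _
    refine integrable_dens n (k+n) (by
        have := Nat.lt_succ_iff.mp (Finset.mem_range.mp hk); omega)
      (fun w => w^k * (1 + z*(starRingEnd ℂ) w)^n)
      (((dens_cont n).smul ((continuous_pow k).mul
        ((continuous_const.add
          (continuous_const.mul (continuous_star (R := ℂ)))).pow n))).aestronglyMeasurable)
      ((1+‖z‖)^n)
      (fun w => ?_)
    have hzw : ‖1 + z * (starRingEnd ℂ) w‖ ≤ (1+‖z‖)*(1+‖w‖) := by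
      calc ‖1 + z * (starRingEnd ℂ) w‖ ≤ 1 + ‖z‖*‖w‖ := by
            refine (norm_add_le _ _).trans ?_
            rw [norm_one, norm_mul, RCLike.norm_conj]
      _ ≤ (1+‖z‖)*(1+‖w‖) := by nlinarith [norm_nonneg z, norm_nonneg w]
    rw [norm_mul, norm_pow, norm_pow]
    calc ‖w‖^k * ‖1 + z * (starRingEnd ℂ) w‖^n
        ≤ (1+‖w‖)^k * ((1+‖z‖)*(1+‖w‖))^n := by
          apply mul_le_mul
          · exact pow_le_pow_left₀ (norm_nonneg w) (by linarith [norm_nonneg w]) k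
          · exact pow_le_pow_left₀ (norm_nonneg _) hzw n
          · positivity
          · positivity
    _ = (1+‖z‖)^n * (1+‖w‖)^(k+n) := by rw [mul_pow, pow_add]; ring
  · simp_rw [integral_const_mul]
    rw [Finset.mul_sum]
    refine Eq.trans (Finset.sum_congr rfl fun k hk => ?_) (hfe z).symm
    have hk' : k ≤ n := Nat.lt_succ_iff.mp (Finset.mem_range.mp hk)
    rw [show ((n:ℂ)+1) * (f.coeff k *
        ∫ w : ℂ, dens n w • (w^k * (1 + z * (starRingEnd ℂ) w)^n))
      = f.coeff k * (((n:ℂ)+1) *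
        ∫ w : ℂ, dens n w • (w^k * (1 + z * (starRingEnd ℂ) w)^n)) by ring,
      mono_repr n k hk' z]
end

section
/- Let λ₁, λ₂ be real numbers with λ₁ ≥ 0, λ₂ ≤ 0 and (λ₁, λ₂) ≠ (0,0). Then ∫_{ℂ²} |λ₁·|y|² + λ₂·|ξ|²| · e^{−|y|²−|ξ|²} dA(y) dA(ξ) = π²·(λ₁² + λ₂²)/(λ₁ − λ₂), where dA denotes Lebesgue measure on ℂ ≅ ℝ². -/
open MeasureTheory Real Set





lemma integral_complex_radial (g : ℝ → ℝ) :
    (∫ z : ℂ, g (‖z‖ ^ 2)) = Real.pi * ∫ t in Ioi (0:ℝ), g t := by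
  have h := MeasureTheory.integral_fun_norm_addHaar (volume : Measure ℂ) (fun y => g (y ^ 2))
  rw [Complex.finrank_real_complex] at h
  have hball : ((volume : Measure ℂ) (Metric.ball 0 1)).toReal = Real.pi := by
    simp [Complex.volume_ball]
  rw [measureReal_def, hball] at h
  simp only [pow_one, smul_eq_mul, nsmul_eq_mul, Nat.cast_ofNat] at h
  have h2 := integral_comp_rpow_Ioi_of_pos (g := g) (p := 2) two_pos
  have h3 : ∀ x : ℝ, x ^ (2:ℝ) = x ^ 2 := fun x => by
    rw [show (2:ℝ) = ((2:ℕ):ℝ) by norm_num, Real.rpow_natCast]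
  simp only [show (2:ℝ) - 1 = 1 by norm_num, Real.rpow_one, smul_eq_mul, h3] at h2
  norm_num at h
  rw [h, ← h2]
  simp_rw [mul_assoc]
  rw [MeasureTheory.integral_const_mul]
  ring




lemma aux_te {t : ℝ} (ht : 0 ≤ t) : t * Real.exp (-t) ≤ Real.exp (-(t/2)) := by
  have h1 : t ≤ Real.exp (t/2) := by
    have h := Real.add_one_le_exp (t/4)
    have h2 : Real.exp (t/2) = Real.exp (t/4) * Real.exp (t/4) := by
      rw [← Real.exp_add]; ring_nf
    nlinarith [Real.exp_pos (t/4), sq_nonneg (Real.exp (t/4) - 1), sq_nonneg (t/4 - 1)]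
  have h2 : Real.exp (-t) = Real.exp (-(t/2)) * Real.exp (-(t/2)) := by
    rw [← Real.exp_add]; ring_nf
  have hb := Real.exp_pos (-(t/2))
  have hbe : Real.exp (-(t/2)) * Real.exp (t/2) = 1 := by
    rw [← Real.exp_add]; ring_nf; exact Real.exp_zero
  nlinarith [mul_le_mul_of_nonneg_left h1 hb.le]

lemma integrable_gauss_complex {b : ℝ} (hb : 0 < b) :
    Integrable (fun z : ℂ => Real.exp (-b * ‖z‖ ^ 2)) := by
  have h := (GaussianFourier.integrable_cexp_neg_mul_sq_norm_add (V := ℂ) (b := (b:ℂ))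
    (by simpa using hb) 0 0).norm
  have : ∀ v : ℂ, ‖Complex.exp (-(b:ℂ) * (‖v‖:ℂ) ^ 2 + (0:ℂ) * ((inner ℝ (0:ℂ) v : ℝ) : ℂ))‖
      = Real.exp (-b * ‖v‖ ^ 2) := by
    intro v
    rw [Complex.norm_exp]
    congr 1
    simp only [Complex.add_re, Complex.neg_re, Complex.mul_re, Complex.ofReal_re,
      Complex.ofReal_im, ← Complex.ofReal_pow]
    simp
  exact h.congr (Filter.Eventually.of_forall this)

lemma integrable_main (l1 l2 : ℝ) :
    Integrable (fun p : ℂ × ℂ =>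
      |l1 * ‖p.1‖ ^ 2 + l2 * ‖p.2‖ ^ 2| * Real.exp (-‖p.1‖ ^ 2 - ‖p.2‖ ^ 2)) := by
  have hg : Integrable (fun z : ℂ => Real.exp (-(1/2) * ‖z‖ ^ 2)) :=
    integrable_gauss_complex (by norm_num)
  have hprod : Integrable (fun p : ℂ × ℂ =>
      Real.exp (-(1/2) * ‖p.1‖ ^ 2) * Real.exp (-(1/2) * ‖p.2‖ ^ 2)) (volume.prod volume) :=
    hg.mul_prod hg
  rw [← Measure.volume_eq_prod] at hprod
  refine (hprod.const_mul (|l1| + |l2|)).mono' ?_ ?_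
  · apply Continuous.aestronglyMeasurable
    fun_prop
  · filter_upwards with p
    set A := ‖p.1‖ ^ 2 with hA
    set B := ‖p.2‖ ^ 2 with hB
    have hA0 : 0 ≤ A := by positivity
    have hB0 : 0 ≤ B := by positivity
    have h1 : |l1 * A + l2 * B| ≤ (|l1| + |l2|) * (A + B) := by
      calc |l1 * A + l2 * B| ≤ |l1 * A| + |l2 * B| := abs_add_le _ _
        _ = |l1| * A + |l2| * B := by rw [abs_mul, abs_mul, abs_of_nonneg hA0, abs_of_nonneg hB0]
        _ ≤ (|l1| + |l2|) * (A + B) := by nlinarith [abs_nonneg l1, abs_nonneg l2]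
    have h2 : (A + B) * Real.exp (-(A + B)) ≤ Real.exp (-((A + B)/2)) := aux_te (by positivity)
    have h3 : Real.exp (-A - B) = Real.exp (-(A + B)) := by ring_nf
    have h4 : Real.exp (-((A + B)/2)) = Real.exp (-(1/2) * A) * Real.exp (-(1/2) * B) := by
      rw [← Real.exp_add]; ring_nf
    rw [Real.norm_eq_abs, abs_of_nonneg (by positivity)]
    calc |l1 * A + l2 * B| * Real.exp (-A - B)
        ≤ (|l1| + |l2|) * ((A + B) * Real.exp (-(A + B))) := by
          rw [h3, ← mul_assoc]
          exact mul_le_mul_of_nonneg_right h1 (Real.exp_pos _).le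
      _ ≤ (|l1| + |l2|) * Real.exp (-((A + B)/2)) := by
          have : 0 ≤ |l1| + |l2| := by positivity
          nlinarith
      _ = (|l1| + |l2|) * (Real.exp (-(1/2) * A) * Real.exp (-(1/2) * B)) := by rw [h4]




lemma integrableOn_exp_neg' : IntegrableOn (fun s : ℝ => Real.exp (-s)) (Ioi 0) := by
  simpa using exp_neg_integrableOn_Ioi 0 one_pos

lemma integrableOn_id_mul_exp_neg : IntegrableOn (fun s : ℝ => s * Real.exp (-s)) (Ioi 0) := by
  have h := Real.GammaIntegral_convergent (by norm_num : (0:ℝ) < 2)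
  refine h.congr_fun (fun s _ => ?_) measurableSet_Ioi
  rw [show (2:ℝ) - 1 = 1 by norm_num]; simp only [Real.rpow_one]
  ring

lemma integral_id_mul_exp_neg : ∫ s in Ioi (0:ℝ), s * Real.exp (-s) = 1 := by
  have h := Real.Gamma_eq_integral (by norm_num : (0:ℝ) < 2)
  rw [Real.Gamma_two] at h
  have e : ∀ x : ℝ, Real.exp (-x) * x ^ ((2:ℝ)-1) = x * Real.exp (-x) := fun x => by
    rw [show (2:ℝ) - 1 = 1 by norm_num, Real.rpow_one]; ring
  simp_rw [e] at h
  exact h.symm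

lemma inner_abs_integral {c m : ℝ} (hc : 0 ≤ c) (hm : 0 ≤ m) :
    ∫ s in Ioi (0:ℝ), |c - m * s| * Real.exp (-s)
      = c - m + 2 * m * Real.exp (-(c/m)) := by
  rcases hm.eq_or_lt with h0 | h0
  · simp only [← h0, zero_mul, sub_zero, abs_of_nonneg hc, mul_zero, zero_mul, add_zero]
    rw [MeasureTheory.integral_const_mul, integral_exp_neg_Ioi_zero]
    ring
  have hs0 : (0:ℝ) ≤ c/m := div_nonneg hc h0.le
  have habs : ∀ s : ℝ, |c - m*s| * Real.exp (-s)
      = (m*s - c) * Real.exp (-s) + 2 * (max (c - m*s) 0 * Real.exp (-s)) := by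
    intro s
    rcases le_total (c - m*s) 0 with h | h
    · rw [abs_of_nonpos h, max_eq_right h]; ring
    · rw [abs_of_nonneg h, max_eq_left h]; ring
  have hI1 : IntegrableOn (fun s : ℝ => (m*s - c) * Real.exp (-s)) (Ioi 0) := by
    have base : IntegrableOn (fun s : ℝ => m * (s * Real.exp (-s)) - c * Real.exp (-s)) (Ioi 0) :=
      (integrableOn_id_mul_exp_neg.const_mul m).sub (integrableOn_exp_neg'.const_mul c)
    exact base.congr_fun (fun s _ => by ring) measurableSet_Ioi
  have hI2 : IntegrableOn (fun s : ℝ => max (c - m*s) 0 * Real.exp (-s)) (Ioi 0) := by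
    refine Integrable.mono' (integrableOn_exp_neg'.const_mul c) ?_ ?_
    · exact Continuous.aestronglyMeasurable (by fun_prop)
    · filter_upwards [ae_restrict_mem measurableSet_Ioi] with s hs
      rw [Real.norm_eq_abs, abs_of_nonneg (by positivity)]
      have hmax : max (c - m*s) 0 ≤ c := by
        apply max_le _ hc
        nlinarith [mem_Ioi.mp hs]
      nlinarith [Real.exp_pos (-s)]
  simp_rw [habs]
  rw [MeasureTheory.integral_add hI1 (hI2.const_mul 2)]
  have e1 : ∫ s in Ioi (0:ℝ), (m*s - c) * Real.exp (-s) = m - c := by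
    have e : (fun s : ℝ => (m*s - c) * Real.exp (-s))
        = fun s => m * (s * Real.exp (-s)) - c * Real.exp (-s) := by funext s; ring
    rw [e, MeasureTheory.integral_sub (integrableOn_id_mul_exp_neg.const_mul m)
      (integrableOn_exp_neg'.const_mul c), MeasureTheory.integral_const_mul,
      MeasureTheory.integral_const_mul, integral_id_mul_exp_neg, integral_exp_neg_Ioi_zero]
    ring
  have e2 : ∫ s in Ioi (0:ℝ), max (c - m*s) 0 * Real.exp (-s)
      = m * Real.exp (-(c/m)) - m + c := by
    have hsplit : Ioi (0:ℝ) = Ioc 0 (c/m) ∪ Ioi (c/m) := (Set.Ioc_union_Ioi_eq_Ioi hs0).symm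
    rw [hsplit, MeasureTheory.setIntegral_union (Set.Ioc_disjoint_Ioi le_rfl) measurableSet_Ioi
      (hI2.mono_set (by rw [hsplit]; exact subset_union_left))
      (hI2.mono_set (by rw [hsplit]; exact subset_union_right))]
    have ezero : ∫ s in Ioi (c/m), max (c - m*s) 0 * Real.exp (-s) = 0 := by
      rw [setIntegral_congr_fun measurableSet_Ioi (g := fun _ => (0:ℝ))
        (fun s hs => by
          have hcs : c < s * m := (div_lt_iff₀ h0).mp (mem_Ioi.mp hs)
          have : c - m*s ≤ 0 := by nlinarith
          simp [max_eq_right this]), integral_zero]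
    have eIoc : ∫ s in Ioc (0:ℝ) (c/m), max (c - m*s) 0 * Real.exp (-s)
        = m * Real.exp (-(c/m)) - m + c := by
      rw [setIntegral_congr_fun measurableSet_Ioc
        (g := fun s => (c - m*s) * Real.exp (-s)) (fun s hs => by
          have : s * m ≤ c := (le_div_iff₀ h0).mp hs.2
          have h' : 0 ≤ c - m*s := by nlinarith
          rw [max_eq_left h'])]
      rw [← intervalIntegral.integral_of_le hs0]
      have hderiv : ∀ x ∈ Set.uIcc (0:ℝ) (c/m),
          HasDerivAt (fun x => (m - c + m*x) * Real.exp (-x)) ((c - m*x) * Real.exp (-x)) x := by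
        intro x _
        have h1 : HasDerivAt (fun x : ℝ => m - c + m*x) m x := by
          simpa using ((hasDerivAt_id x).const_mul m).const_add (m - c)
        have h2 : HasDerivAt (fun x : ℝ => Real.exp (-x)) (-Real.exp (-x)) x := by
          simpa [Function.comp_def] using (Real.hasDerivAt_exp (-x)).comp x (hasDerivAt_neg x)
        exact (h1.mul h2).congr_deriv (by ring)
      rw [intervalIntegral.integral_eq_sub_of_hasDerivAt hderiv
        ((by fun_prop : Continuous fun x : ℝ => (c - m*x) * Real.exp (-x)).intervalIntegrable _ _)]
      have hmc : m * (c/m) = c := by field_simp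
      rw [hmc]
      simp [Real.exp_zero]
      ring
    rw [ezero, eIoc]
    ring
  rw [e1, MeasureTheory.integral_const_mul, e2]
  ring

lemma outer_integral {l1 m : ℝ} (hl1 : 0 ≤ l1) (hm : 0 ≤ m) (hpos : 0 < l1 + m) :
    ∫ t in Ioi (0:ℝ), (l1 * t - m + 2 * m * Real.exp (-(l1 * t / m))) * Real.exp (-t)
      = (l1^2 + m^2) / (l1 + m) := by
  rcases hm.eq_or_lt with h0 | h0
  · have e : (fun t : ℝ => (l1*t - m + 2*m*Real.exp (-(l1*t/m))) * Real.exp (-t))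
        = fun t => l1 * (t * Real.exp (-t)) := by
      funext t; rw [← h0]; ring
    rw [e, MeasureTheory.integral_const_mul, integral_id_mul_exp_neg]
    have hl1' : l1 ≠ 0 := by rw [← h0] at hpos; simpa using hpos.ne'
    rw [← h0]
    field_simp
    ring
  · have ha : (0:ℝ) < 1 + l1/m := by positivity
    have key : ∀ t : ℝ, (l1*t - m + 2*m*Real.exp (-(l1*t/m))) * Real.exp (-t)
        = l1 * (t * Real.exp (-t)) - m * Real.exp (-t)
          + (2*m) * Real.exp (-((1 + l1/m) * t)) := by
      intro t
      have he : Real.exp (-(l1*t/m)) * Real.exp (-t) = Real.exp (-((1 + l1/m) * t)) := by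
        rw [← Real.exp_add]; congr 1; field_simp; ring
      calc (l1*t - m + 2*m*Real.exp (-(l1*t/m))) * Real.exp (-t)
          = l1 * (t * Real.exp (-t)) - m * Real.exp (-t)
            + (2*m) * (Real.exp (-(l1*t/m)) * Real.exp (-t)) := by ring
        _ = _ := by rw [he]
    simp_rw [key]
    have i1 : IntegrableOn (fun t : ℝ => l1 * (t * Real.exp (-t))) (Ioi 0) :=
      integrableOn_id_mul_exp_neg.const_mul l1
    have i2 : IntegrableOn (fun t : ℝ => m * Real.exp (-t)) (Ioi 0) :=
      integrableOn_exp_neg'.const_mul m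
    have i3 : IntegrableOn (fun t : ℝ => (2*m) * Real.exp (-((1 + l1/m) * t))) (Ioi 0) := by
      have base : IntegrableOn (fun x : ℝ => 2 * m * Real.exp (-(1 + l1/m) * x)) (Ioi 0) :=
        (exp_neg_integrableOn_Ioi 0 ha).const_mul (2*m)
      exact base.congr_fun (fun t _ => by simp only [neg_mul]) measurableSet_Ioi
    have i12 : IntegrableOn (fun t : ℝ => l1 * (t * Real.exp (-t)) - m * Real.exp (-t)) (Ioi 0) :=
      i1.sub i2
    rw [MeasureTheory.integral_add i12 i3, MeasureTheory.integral_sub i1 i2,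
      MeasureTheory.integral_const_mul, MeasureTheory.integral_const_mul,
      MeasureTheory.integral_const_mul, integral_id_mul_exp_neg, integral_exp_neg_Ioi_zero]
    have e3 : ∫ t in Ioi (0:ℝ), Real.exp (-((1 + l1/m) * t)) = (1 + l1/m)⁻¹ := by
      have h := integral_comp_mul_left_Ioi (fun x => Real.exp (-x)) 0 ha
      simp only [mul_zero, smul_eq_mul, integral_exp_neg_Ioi_zero, mul_one] at h
      exact h
    rw [e3]
    have hm' : m ≠ 0 := h0.ne'
    have hlm : l1 + m ≠ 0 := hpos.ne'
    field_simp
    ring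

/-- `∫_{ℂ²} |λ₁|y|² + λ₂|ξ|²| · e^{−|y|²−|ξ|²} dA(y) dA(ξ) = π²(λ₁²+λ₂²)/(λ₁−λ₂)` for
`λ₁ ≥ 0 ≥ λ₂`, `(λ₁, λ₂) ≠ (0,0)`. -/
theorem kac_rice_gaussian_integral_C2 (l1 l2 : ℝ) (h1 : 0 ≤ l1) (h2 : l2 ≤ 0)
    (hne : (l1, l2) ≠ (0, 0)) :
    ∫ p : ℂ × ℂ, |l1 * ‖p.1‖ ^ 2 + l2 * ‖p.2‖ ^ 2| * Real.exp (-‖p.1‖ ^ 2 - ‖p.2‖ ^ 2) =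
      Real.pi ^ 2 * (l1 ^ 2 + l2 ^ 2) / (l1 - l2) := by
  have hm : 0 ≤ -l2 := by linarith
  have hpos : 0 < l1 - l2 := by
    rcases eq_or_lt_of_le h1 with h | h
    · rcases eq_or_lt_of_le h2 with h' | h'
      · exact absurd (by rw [← h, h']) hne
      · linarith
    · linarith
  have hint := integrable_main l1 l2
  rw [Measure.volume_eq_prod] at hint
  rw [Measure.volume_eq_prod, MeasureTheory.integral_prod _ hint]
  have inner_eq : ∀ y : ℂ, (∫ ξ : ℂ, |l1 * ‖y‖^2 + l2 * ‖ξ‖^2| * Real.exp (-‖y‖^2 - ‖ξ‖^2))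
      = Real.pi * ∫ s in Ioi (0:ℝ), |l1 * ‖y‖^2 + l2 * s| * Real.exp (-‖y‖^2 - s) := fun y =>
    integral_complex_radial (fun s => |l1 * ‖y‖^2 + l2 * s| * Real.exp (-‖y‖^2 - s))
  simp_rw [inner_eq]
  rw [MeasureTheory.integral_const_mul]
  rw [integral_complex_radial (fun a => ∫ s in Ioi (0:ℝ), |l1 * a + l2 * s| * Real.exp (-a - s))]
  have key : ∀ t ∈ Ioi (0:ℝ), (∫ s in Ioi (0:ℝ), |l1 * t + l2 * s| * Real.exp (-t - s))
      = (l1 * t - (-l2) + 2 * (-l2) * Real.exp (-(l1 * t / (-l2)))) * Real.exp (-t) := by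
    intro t ht
    have e : ∀ s : ℝ, |l1 * t + l2 * s| * Real.exp (-t - s)
        = Real.exp (-t) * (|l1 * t - (-l2) * s| * Real.exp (-s)) := by
      intro s
      rw [show -t - s = -t + -s by ring, Real.exp_add,
        show l1 * t + l2 * s = l1 * t - (-l2) * s by ring]
      ring
    simp_rw [e]
    rw [MeasureTheory.integral_const_mul,
      inner_abs_integral (mul_nonneg h1 (mem_Ioi.mp ht).le) hm]
    ring
  rw [setIntegral_congr_fun measurableSet_Ioi key]
  rw [outer_integral h1 hm (by linarith)]
  have hne' : l1 - l2 ≠ 0 := hpos.ne'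
  rw [show l1 + -l2 = l1 - l2 by ring, show l1^2 + (-l2)^2 = l1^2 + l2^2 by ring]
  ring
end

section
/- For u ∈ ℂ set q = 1+|u|²/n, A_n = n·q^{n−1} + (n−1)|u|²·q^{n−2}, b₁ⁿ = 2n(n−1)(u/√n)q^{n−2} + n(n−1)(n−2)(u|u|²/n^{3/2})q^{n−3}, b₂ⁿ = √n·conj(u)·q^{n−1}, c₁₁ⁿ = 2n(n−1)q^{n−2} + 4n(n−1)(n−2)(|u|²/n)q^{n−3} + n(n−1)(n−2)(n−3)(|u|⁴/n²)q^{n−4}, and c₂₂ⁿ = q^n − 1. Then lim_{n→∞} n^{−2}·( c₁₁ⁿ − |b₁ⁿ|²/A_n ) = (2 + 2|u|² + |u|⁴)·e^{|u|²}/(1+|u|²), and lim_{n→∞} ( c₂₂ⁿ − |b₂ⁿ|²/A_n ) = (e^{|u|²} − 1 − |u|²)/(1+|u|²). -/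
open Filter

/-- `q = 1 + |u|²/n`. -/
noncomputable def qq (u : ℂ) (n : ℕ) : ℝ := 1 + ‖u‖ ^ 2 / n

/-- `A_n = n·q^{n−1} + (n−1)|u|²·q^{n−2}`. -/
noncomputable def An (u : ℂ) (n : ℕ) : ℝ :=
  (n : ℝ) * qq u n ^ (n - 1) + ((n : ℝ) - 1) * ‖u‖ ^ 2 * qq u n ^ (n - 2)

/-- `b₁ⁿ = 2n(n−1)(u/√n)q^{n−2} + n(n−1)(n−2)(u|u|²/n^{3/2})q^{n−3}`. -/
noncomputable def b1 (u : ℂ) (n : ℕ) : ℂ :=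
  2 * (n : ℂ) * ((n : ℂ) - 1) * (u / Complex.ofReal (Real.sqrt n)) *
      Complex.ofReal (qq u n) ^ (n - 2) +
    (n : ℂ) * ((n : ℂ) - 1) * ((n : ℂ) - 2) *
      (u * Complex.ofReal (‖u‖ ^ 2) / Complex.ofReal ((n : ℝ) ^ ((3 : ℝ) / 2))) *
      Complex.ofReal (qq u n) ^ (n - 3)

/-- `b₂ⁿ = √n·conj(u)·q^{n−1}`. -/
noncomputable def b2 (u : ℂ) (n : ℕ) : ℂ :=
  Complex.ofReal (Real.sqrt n) * (starRingEnd ℂ) u * Complex.ofReal (qq u n) ^ (n - 1)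

/-- `c₁₁ⁿ = 2n(n−1)q^{n−2} + 4n(n−1)(n−2)(|u|²/n)q^{n−3} + n(n−1)(n−2)(n−3)(|u|⁴/n²)q^{n−4}`. -/
noncomputable def c11 (u : ℂ) (n : ℕ) : ℝ :=
  2 * (n : ℝ) * ((n : ℝ) - 1) * qq u n ^ (n - 2) +
    4 * (n : ℝ) * ((n : ℝ) - 1) * ((n : ℝ) - 2) * (‖u‖ ^ 2 / n) * qq u n ^ (n - 3) +
    (n : ℝ) * ((n : ℝ) - 1) * ((n : ℝ) - 2) * ((n : ℝ) - 3) * (‖u‖ ^ 4 / (n : ℝ) ^ 2) *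
      qq u n ^ (n - 4)

/-- `c₂₂ⁿ = qⁿ − 1`. -/
noncomputable def c22 (u : ℂ) (n : ℕ) : ℝ := qq u n ^ n - 1

lemma qq_ge_one (u : ℂ) (n : ℕ) : 1 ≤ qq u n := by
  have : (0:ℝ) ≤ ‖u‖ ^ 2 / n := by positivity
  unfold qq; linarith

lemma qq_pos (u : ℂ) (n : ℕ) : 0 < qq u n := lt_of_lt_of_le one_pos (qq_ge_one u n)

lemma qq_pow_tendsto (u : ℂ) (k : ℕ) :
    Tendsto (fun n : ℕ => qq u n ^ (n - k)) atTop (nhds (Real.exp (‖u‖ ^ 2))) := by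
  have h1 : Tendsto (fun n : ℕ => qq u n ^ n) atTop (nhds (Real.exp (‖u‖ ^ 2))) := by
    simpa [qq] using Real.tendsto_one_add_div_pow_exp (‖u‖ ^ 2)
  have hq1 : Tendsto (fun n : ℕ => qq u n) atTop (nhds 1) := by
    have h0 : Tendsto (fun n : ℕ => ‖u‖ ^ 2 * (1 / (n:ℝ))) atTop (nhds (‖u‖ ^ 2 * 0)) :=
      tendsto_const_nhds.mul tendsto_one_div_atTop_nhds_zero_nat
    have := (tendsto_const_nhds (x := (1:ℝ))).add h0
    simpa [qq, mul_one_div, div_eq_mul_inv] using this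
  have h2 : Tendsto (fun n : ℕ => qq u n ^ k) atTop (nhds 1) := by
    simpa using hq1.pow k
  have h3 := h1.div h2 one_ne_zero
  rw [div_one] at h3
  refine Tendsto.congr' ?_ h3
  filter_upwards [eventually_ge_atTop k] with n hn
  rw [Pi.div_apply, pow_sub₀ _ (qq_pos u n).ne' hn, div_eq_mul_inv]

set_option maxHeartbeats 1000000 in
lemma alg1 (N t Q1 Q2 Q3 Q4 : ℝ) (hN : 0 < N)
    (hsd : 0 < Q1 + (1-1/N)*t*Q2) :
    (2*(1-1/N)*Q2 + 4*(1-1/N)*(1-2/N)*t*Q3 + (1-1/N)*(1-2/N)*(1-3/N)*t^2*Q4)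
      - t*(2*(1-1/N)*Q2 + (1-1/N)*(1-2/N)*t*Q3)^2/(Q1 + (1-1/N)*t*Q2)
    = (N^2)⁻¹ * ((2*N*(N-1)*Q2 + 4*N*(N-1)*(N-2)*(t/N)*Q3 + N*(N-1)*(N-2)*(N-3)*(t^2/N^2)*Q4)
        - (t*(2*N*(N-1)*Q2 + (N-1)*(N-2)*t*Q3)^2/N) / (N*Q1 + (N-1)*t*Q2)) := by
  have hNe := hN.ne'
  have e4 : 2*N*(N-1)*Q2 + (N-1)*(N-2)*t*Q3
      = N^2 * (2*(1-1/N)*Q2 + (1-1/N)*(1-2/N)*t*Q3) := by field_simp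
  have e5 : 2*N*(N-1)*Q2 + 4*N*(N-1)*(N-2)*(t/N)*Q3 + N*(N-1)*(N-2)*(N-3)*(t^2/N^2)*Q4
      = N^2 * (2*(1-1/N)*Q2 + 4*(1-1/N)*(1-2/N)*t*Q3 + (1-1/N)*(1-2/N)*(1-3/N)*t^2*Q4) := by
    field_simp
  have e1 : N*Q1+(N-1)*t*Q2 = N * (Q1 + (1-1/N)*t*Q2) := by field_simp
  rw [e4, e5, e1]
  generalize (2*(1-1/N)*Q2 + 4*(1-1/N)*(1-2/N)*t*Q3 + (1-1/N)*(1-2/N)*(1-3/N)*t^2*Q4 : ℝ) = A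
  generalize (2*(1-1/N)*Q2 + (1-1/N)*(1-2/N)*t*Q3 : ℝ) = S
  generalize hgen : (Q1 + (1-1/N)*t*Q2 : ℝ) = D at hsd ⊢
  field_simp


/-- Rescaling limits of the (1,1) and (2,2) entries of the conditional covariance matrix
`Λ_n = C_n − A_n⁻¹ B_n* B_n` at `u/√n`. -/
theorem Lambda_entries_rescaled_limit (u : ℂ) :
    Tendsto (fun n : ℕ => ((n : ℝ) ^ 2)⁻¹ * (c11 u n - ‖b1 u n‖ ^ 2 / An u n))
      atTop (nhds ((2 + 2 * ‖u‖ ^ 2 + ‖u‖ ^ 4) * Real.exp (‖u‖ ^ 2) / (1 + ‖u‖ ^ 2))) ∧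
    Tendsto (fun n : ℕ => c22 u n - ‖b2 u n‖ ^ 2 / An u n)
      atTop (nhds ((Real.exp (‖u‖ ^ 2) - 1 - ‖u‖ ^ 2) / (1 + ‖u‖ ^ 2))) := by
  have hQ := qq_pow_tendsto u
  have hE := Real.exp_pos (‖u‖ ^ 2)
  have ht0 : (0:ℝ) ≤ ‖u‖ ^ 2 := sq_nonneg _
  have h1t : (0:ℝ) < 1 + ‖u‖ ^ 2 := by positivity
  have hxk : ∀ c : ℝ, Tendsto (fun n : ℕ => c / (n:ℝ)) atTop (nhds 0) := fun c => by
    simpa [mul_one_div, div_eq_mul_inv] using tendsto_one_div_atTop_nhds_zero_nat.const_mul c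
  have hsub : ∀ c : ℝ, Tendsto (fun n : ℕ => 1 - c / (n:ℝ)) atTop (nhds (1 - 0)) := fun c =>
    (tendsto_const_nhds (x := (1:ℝ))).sub (hxk c)
  have hDne : Real.exp (‖u‖ ^ 2) + (1 - 0) * ‖u‖ ^ 2 * Real.exp (‖u‖ ^ 2) ≠ 0 := by
    have h : (0:ℝ) < Real.exp (‖u‖ ^ 2) + (1 - 0) * ‖u‖ ^ 2 * Real.exp (‖u‖ ^ 2) := by
      nlinarith [mul_nonneg ht0 hE.le]
    exact h.ne'
  have hD : Tendsto (fun n : ℕ => qq u n ^ (n - 1) + (1 - 1/(n:ℝ)) * ‖u‖ ^ 2 * qq u n ^ (n - 2))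
      atTop (nhds (Real.exp (‖u‖ ^ 2) + (1 - 0) * ‖u‖ ^ 2 * Real.exp (‖u‖ ^ 2))) :=
    (hQ 1).add (((hsub 1).mul tendsto_const_nhds).mul (hQ 2))
  constructor
  · -- (1,1) entry
    have T2 : Tendsto (fun n : ℕ => 2 * (1 - 1/(n:ℝ)) * qq u n ^ (n - 2)) atTop
        (nhds (2 * (1 - 0) * Real.exp (‖u‖ ^ 2))) :=
      ((tendsto_const_nhds (x := (2:ℝ))).mul (hsub 1)).mul (hQ 2)
    have T3 : Tendsto (fun n : ℕ => 4 * (1 - 1/(n:ℝ)) * (1 - 2/(n:ℝ)) * ‖u‖ ^ 2 * qq u n ^ (n - 3))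
        atTop (nhds (4 * (1 - 0) * (1 - 0) * ‖u‖ ^ 2 * Real.exp (‖u‖ ^ 2))) :=
      ((((tendsto_const_nhds (x := (4:ℝ))).mul (hsub 1)).mul (hsub 2)).mul
        tendsto_const_nhds).mul (hQ 3)
    have T4 : Tendsto (fun n : ℕ =>
        (1 - 1/(n:ℝ)) * (1 - 2/(n:ℝ)) * (1 - 3/(n:ℝ)) * (‖u‖ ^ 2) ^ 2 * qq u n ^ (n - 4))
        atTop (nhds ((1 - 0) * (1 - 0) * (1 - 0) * (‖u‖ ^ 2) ^ 2 * Real.exp (‖u‖ ^ 2))) :=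
      ((((hsub 1).mul (hsub 2)).mul (hsub 3)).mul tendsto_const_nhds).mul (hQ 4)
    have S : Tendsto (fun n : ℕ =>
        2 * (1 - 1/(n:ℝ)) * qq u n ^ (n - 2) +
          (1 - 1/(n:ℝ)) * (1 - 2/(n:ℝ)) * ‖u‖ ^ 2 * qq u n ^ (n - 3)) atTop
        (nhds (2 * (1 - 0) * Real.exp (‖u‖ ^ 2) +
          (1 - 0) * (1 - 0) * ‖u‖ ^ 2 * Real.exp (‖u‖ ^ 2))) :=
      T2.add ((((hsub 1).mul (hsub 2)).mul tendsto_const_nhds).mul (hQ 3))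
    have key1 := ((T2.add T3).add T4).sub
      (((tendsto_const_nhds (x := ‖u‖ ^ 2)).mul (S.pow 2)).div hD hDne)
    have key1' : Tendsto (fun n : ℕ =>
        (2 * (1 - 1/(n:ℝ)) * qq u n ^ (n - 2) +
          4 * (1 - 1/(n:ℝ)) * (1 - 2/(n:ℝ)) * ‖u‖ ^ 2 * qq u n ^ (n - 3) +
          (1 - 1/(n:ℝ)) * (1 - 2/(n:ℝ)) * (1 - 3/(n:ℝ)) * (‖u‖ ^ 2) ^ 2 * qq u n ^ (n - 4)) -
        ‖u‖ ^ 2 * (2 * (1 - 1/(n:ℝ)) * qq u n ^ (n - 2) +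
          (1 - 1/(n:ℝ)) * (1 - 2/(n:ℝ)) * ‖u‖ ^ 2 * qq u n ^ (n - 3)) ^ 2 /
          (qq u n ^ (n - 1) + (1 - 1/(n:ℝ)) * ‖u‖ ^ 2 * qq u n ^ (n - 2))) atTop
        (nhds ((2 + 2 * ‖u‖ ^ 2 + ‖u‖ ^ 4) * Real.exp (‖u‖ ^ 2) / (1 + ‖u‖ ^ 2))) := by
      convert key1 using 2
      have hD2 : Real.exp (‖u‖ ^ 2) + ‖u‖ ^ 2 * Real.exp (‖u‖ ^ 2) ≠ 0 := by positivity
      norm_num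
      field_simp
      ring
    refine Tendsto.congr' ?_ key1'
    filter_upwards [eventually_ge_atTop 4] with n hn
    have hn0 : (0:ℝ) < (n:ℝ) := by exact_mod_cast Nat.pos_of_ne_zero (by omega)
    have hn1 : (1:ℝ) ≤ (n:ℝ) := by exact_mod_cast (by omega : 1 ≤ n)
    have hq := qq_pos u n
    have h32 : ((n:ℝ)) ^ ((3:ℝ)/2) = (n:ℝ) * Real.sqrt (n:ℝ) := by
      rw [Real.sqrt_eq_rpow, show (3:ℝ)/2 = 1 + 1/2 by norm_num, Real.rpow_add hn0,
        Real.rpow_one]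
    have hsne : Real.sqrt (n:ℝ) ≠ 0 := (Real.sqrt_pos.mpr hn0).ne'
    have hb : b1 u n = Complex.ofReal ((2 * (n:ℝ) * ((n:ℝ) - 1) * qq u n ^ (n - 2) +
        ((n:ℝ) - 1) * ((n:ℝ) - 2) * ‖u‖ ^ 2 * qq u n ^ (n - 3)) / Real.sqrt (n:ℝ)) * u := by
      rw [b1, h32]
      have hsC : (Complex.ofReal (Real.sqrt (n:ℝ))) ≠ 0 := Complex.ofReal_ne_zero.mpr hsne
      have hnC : ((n:ℂ)) ≠ 0 := by exact_mod_cast hn0.ne'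
      push_cast
      field_simp
    have hb1sq : ‖b1 u n‖ ^ 2 = ‖u‖ ^ 2 * (2 * (n:ℝ) * ((n:ℝ) - 1) * qq u n ^ (n - 2) +
        ((n:ℝ) - 1) * ((n:ℝ) - 2) * ‖u‖ ^ 2 * qq u n ^ (n - 3)) ^ 2 / (n:ℝ) := by
      rw [hb, norm_mul, Complex.norm_real, Real.norm_eq_abs, mul_pow, sq_abs, div_pow,
        Real.sq_sqrt hn0.le]
      ring
    have h1n : 1/(n:ℝ) ≤ 1 := by rw [div_le_one hn0]; exact hn1
    have hAn : (0:ℝ) < (n:ℝ) * qq u n ^ (n - 1) + ((n:ℝ) - 1) * ‖u‖ ^ 2 * qq u n ^ (n - 2) := by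
      have h1 : (0:ℝ) ≤ (n:ℝ) - 1 := by linarith
      exact add_pos_of_pos_of_nonneg (mul_pos hn0 (pow_pos hq _))
        (mul_nonneg (mul_nonneg h1 ht0) (pow_nonneg hq.le _))
    have hsd : (0:ℝ) < qq u n ^ (n - 1) + (1 - 1/(n:ℝ)) * ‖u‖ ^ 2 * qq u n ^ (n - 2) :=
      add_pos_of_pos_of_nonneg (pow_pos hq _)
        (mul_nonneg (mul_nonneg (by linarith) ht0) (pow_nonneg hq.le _))
    rw [hb1sq, c11, An, show ‖u‖^4 = (‖u‖^2)^2 from by ring]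
    exact alg1 (n:ℝ) (‖u‖^2) (qq u n ^ (n-1)) (qq u n ^ (n-2)) (qq u n ^ (n-3))
      (qq u n ^ (n-4)) hn0 hsd
  · -- (2,2) entry
    have key2 : Tendsto (fun n : ℕ => (qq u n ^ n - 1) -
        ‖u‖ ^ 2 * (qq u n ^ (n - 1)) ^ 2 /
          (qq u n ^ (n - 1) + (1 - 1/(n:ℝ)) * ‖u‖ ^ 2 * qq u n ^ (n - 2))) atTop
        (nhds ((Real.exp (‖u‖ ^ 2) - 1) - ‖u‖ ^ 2 * (Real.exp (‖u‖ ^ 2)) ^ 2 /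
          (Real.exp (‖u‖ ^ 2) + (1 - 0) * ‖u‖ ^ 2 * Real.exp (‖u‖ ^ 2)))) :=
      ((hQ 0).sub (tendsto_const_nhds (x := (1:ℝ)))).sub
        (((tendsto_const_nhds (x := ‖u‖ ^ 2)).mul ((hQ 1).pow 2)).div hD hDne)
    have key2' : Tendsto (fun n : ℕ => (qq u n ^ n - 1) -
        ‖u‖ ^ 2 * (qq u n ^ (n - 1)) ^ 2 /
          (qq u n ^ (n - 1) + (1 - 1/(n:ℝ)) * ‖u‖ ^ 2 * qq u n ^ (n - 2))) atTop
        (nhds ((Real.exp (‖u‖ ^ 2) - 1 - ‖u‖ ^ 2) / (1 + ‖u‖ ^ 2))) := by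
      convert key2 using 2
      have hD2 : Real.exp (‖u‖ ^ 2) + ‖u‖ ^ 2 * Real.exp (‖u‖ ^ 2) ≠ 0 := by positivity
      norm_num
      field_simp
      ring
    refine Tendsto.congr' ?_ key2'
    filter_upwards [eventually_ge_atTop 2] with n hn
    have hn0 : (0:ℝ) < (n:ℝ) := by exact_mod_cast Nat.pos_of_ne_zero (by omega)
    have hn1 : (1:ℝ) ≤ (n:ℝ) := by exact_mod_cast (by omega : 1 ≤ n)
    have hq := qq_pos u n
    have hb2 : ‖b2 u n‖ ^ 2 = (n:ℝ) * ‖u‖ ^ 2 * (qq u n ^ (n - 1)) ^ 2 := by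
      have h : ‖b2 u n‖ = Real.sqrt (n:ℝ) * ‖u‖ * qq u n ^ (n - 1) := by
        simp [b2, norm_mul, norm_pow, Complex.norm_real, Real.norm_eq_abs, RCLike.norm_conj,
          abs_of_nonneg (Real.sqrt_nonneg ((n:ℝ))), abs_of_nonneg hq.le]
      rw [h, mul_pow, mul_pow, Real.sq_sqrt hn0.le]
    have h1n : 1/(n:ℝ) ≤ 1 := by rw [div_le_one hn0]; exact hn1
    have hAn : (0:ℝ) < (n:ℝ) * qq u n ^ (n - 1) + ((n:ℝ) - 1) * ‖u‖ ^ 2 * qq u n ^ (n - 2) := by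
      have h1 : (0:ℝ) ≤ (n:ℝ) - 1 := by linarith
      exact add_pos_of_pos_of_nonneg (mul_pos hn0 (pow_pos hq _))
        (mul_nonneg (mul_nonneg h1 ht0) (pow_nonneg hq.le _))
    have hsd : (0:ℝ) < qq u n ^ (n - 1) + (1 - 1/(n:ℝ)) * ‖u‖ ^ 2 * qq u n ^ (n - 2) :=
      add_pos_of_pos_of_nonneg (pow_pos hq _)
        (mul_nonneg (mul_nonneg (by linarith) ht0) (pow_nonneg hq.le _))
    rw [c22, An, hb2]
    field_simp
end

section
/- For every real t ≥ 0, lim_{n→∞} [ ((1+t/n)^{n−1} − 1 + ((n−1)t/n)·(1+t/n)^{n−2}) / ((1+t/n)^n − t) − t·((1+t/n)^{n−1} − 1)² / ((1+t/n)^n − t)² ] = (e^t − 1 + t·e^t)/(e^t − t) − t·(e^t − 1)²/(e^t − t)². -/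
open Filter

private lemma base_tendsto (t : ℝ) :
    Tendsto (fun n : ℕ => (1 + t / n)) atTop (nhds 1) := by
  have h := Tendsto.div_atTop (tendsto_const_nhds (x := t)) tendsto_natCast_atTop_atTop
  simpa using tendsto_const_nhds.add h

private lemma pow_sub_tendsto (t : ℝ) (ht : 0 ≤ t) (k : ℕ) :
    Tendsto (fun n : ℕ => (1 + t / n) ^ (n - k)) atTop (nhds (Real.exp t)) := by
  have h1 : Tendsto (fun n : ℕ => (1 + t / n) ^ n) atTop (nhds (Real.exp t)) :=
    Real.tendsto_one_add_div_pow_exp t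
  have h2 : Tendsto (fun n : ℕ => (1 + t / n) ^ k) atTop (nhds 1) := by
    simpa using (base_tendsto t).pow k
  have hdiv := h1.div h2 one_ne_zero
  rw [div_one] at hdiv
  refine Tendsto.congr' ?_ hdiv
  filter_upwards [eventually_ge_atTop k] with n hn
  have hb : (1 + t / n) ≠ 0 := by positivity
  simp only [Pi.div_apply]
  exact (pow_sub₀ _ hb hn).symm

private lemma coeff_tendsto (t : ℝ) :
    Tendsto (fun n : ℕ => ((n : ℝ) - 1) * t / n) atTop (nhds t) := by
  have h : Tendsto (fun n : ℕ => t - t / n) atTop (nhds (t - 0)) :=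
    tendsto_const_nhds.sub
      (Tendsto.div_atTop (tendsto_const_nhds (x := t)) tendsto_natCast_atTop_atTop)
  rw [sub_zero] at h
  refine Tendsto.congr' ?_ h
  filter_upwards [eventually_ge_atTop 1] with n hn
  have hn' : (n : ℝ) ≠ 0 := Nat.cast_ne_zero.mpr (by omega)
  field_simp

/-- Rescaled conditional density of zeros given a critical point at 0, for SU(2)
polynomials: with `t = n|z|²`, the radial density converges to
`(e^t − 1 + te^t)/(e^t − t) − t(e^t − 1)²/(e^t − t)²`. -/
theorem Dn_rescaled_limit (t : ℝ) (ht : 0 ≤ t) :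
    Tendsto (fun n : ℕ =>
        ((1 + t / n) ^ (n - 1) - 1 + (((n : ℝ) - 1) * t / n) * (1 + t / n) ^ (n - 2)) /
            ((1 + t / n) ^ n - t) -
          t * ((1 + t / n) ^ (n - 1) - 1) ^ 2 / ((1 + t / n) ^ n - t) ^ 2)
      atTop
      (nhds ((Real.exp t - 1 + t * Real.exp t) / (Real.exp t - t) -
        t * (Real.exp t - 1) ^ 2 / (Real.exp t - t) ^ 2)) := by
  have hden : Real.exp t - t ≠ 0 := by
    have := Real.add_one_le_exp t
    linarith
  have h1 := pow_sub_tendsto t ht 1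
  have h2 := pow_sub_tendsto t ht 2
  have h0 : Tendsto (fun n : ℕ => (1 + t / n) ^ n) atTop (nhds (Real.exp t)) :=
    Real.tendsto_one_add_div_pow_exp t
  have hB : Tendsto (fun n : ℕ => (1 + t / n) ^ n - t) atTop (nhds (Real.exp t - t)) :=
    h0.sub tendsto_const_nhds
  have hA : Tendsto
      (fun n : ℕ => (1 + t / n) ^ (n - 1) - 1 + (((n : ℝ) - 1) * t / n) * (1 + t / n) ^ (n - 2))
      atTop (nhds (Real.exp t - 1 + t * Real.exp t)) :=
    (h1.sub tendsto_const_nhds).add ((coeff_tendsto t).mul h2)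
  have hC : Tendsto (fun n : ℕ => t * ((1 + t / n) ^ (n - 1) - 1) ^ 2) atTop
      (nhds (t * (Real.exp t - 1) ^ 2)) :=
    tendsto_const_nhds.mul ((h1.sub tendsto_const_nhds).pow 2)
  have hB2 : Tendsto (fun n : ℕ => ((1 + t / n) ^ n - t) ^ 2) atTop
      (nhds ((Real.exp t - t) ^ 2)) := hB.pow 2
  exact (hA.div hB hden).sub (hC.div hB2 (pow_ne_zero 2 hden))
end
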